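/- For every Lyndon word l, in the free algebra T one has [l] = a_l·l + Σ_w a_w·w, where a_l is a nonzero scalar in F, and the sum runs over words w with |w| = |l| and w > l with scalars a_w in F. -/

import Mathlib

noncomputable section

/-- Lexicographic order on words over the ordered alphabet `x_1 < ⋯ < x_n`. -/
def wlt {n : ℕ} (u v : FreeMonoid (Fin n)) : Prop :=
  List.Lex (· < ·) (FreeMonoid.toList u) (FreeMonoid.toList v)

/-- Lyndon word: nonempty and smaller than every rotation `u₂u₁` coming from a
factorization `u = u₁u₂` into nonempty words. -/
def IsLyndon {n : ℕ} (u : FreeMonoid (Fin n)) : Prop :=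
  u ≠ 1 ∧ ∀ v w : FreeMonoid (Fin n), v ≠ 1 → w ≠ 1 → u = v * w → wlt u (w * v)

/-- `(v, w)` is the Shirshov decomposition of `u`: both factors are Lyndon,
`u = v·w`, and `v` has minimal length among all such factorizations. -/
def IsShirshov {n : ℕ} (u v w : FreeMonoid (Fin n)) : Prop :=
  IsLyndon v ∧ IsLyndon w ∧ u = v * w ∧
    ∀ v' w' : FreeMonoid (Fin n), IsLyndon v' → IsLyndon w' → u = v' * w' →
      FreeMonoid.length v ≤ FreeMonoid.length v'

/-- The `ℤⁿ`-degree of a word: the multidegree counting occurrences of each letter. -/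
def degw {n : ℕ} (w : FreeMonoid (Fin n)) : Fin n → ℕ :=
  fun k => (FreeMonoid.toList w).count k

/-- The word `u` viewed as an element of the free algebra `T = F⟨x_1,…,x_n⟩`. -/
def wordOf (F : Type) [Field F] {n : ℕ} (u : FreeMonoid (Fin n)) :
    MonoidAlgebra F (FreeMonoid (Fin n)) :=
  MonoidAlgebra.of F (FreeMonoid (Fin n)) u

/-- The bicharacter `χ` determined by `χ(e_k, e_l) = q_{kl}`. -/
def chiF (F : Type) [Field F] {n : ℕ} (q : Fin n → Fin n → F) (d e : Fin n → ℕ) : F :=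
  ∏ k : Fin n, ∏ l : Fin n, q k l ^ (d k * e l)


/-! ### Auxiliary lemmas -/

section ListLemmas
variable {A : Type*} [LinearOrder A]

theorem myLex_trans : ∀ {x y z : List A},
    List.Lex (· < ·) x y → List.Lex (· < ·) y z → List.Lex (· < ·) x z
  | _, _, _, .nil, .rel _ => .nil
  | _, _, _, .nil, .cons _ => .nil
  | _, _, _, .rel h, .rel h' => .rel (lt_trans h h')
  | _, _, _, .rel h, .cons _ => .rel h
  | _, _, _, .cons _, .rel h => .rel h
  | _, _, _, .cons h, .cons h' => .cons (myLex_trans h h')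

theorem myLex_asymm {x y : List A} (h : List.Lex (· < ·) x y)
    (h' : List.Lex (· < ·) y x) : False :=
  (List.Lex.asymm (· < ·)).asymm x y h h'

theorem myLex_trichotomy (x y : List A) :
    List.Lex (· < ·) x y ∨ x = y ∨ List.Lex (· < ·) y x :=
  trichotomous_of (List.Lex (· < ·)) x y

theorem myLex_strip : ∀ (p : List A) {x y : List A},
    List.Lex (· < ·) (p ++ x) (p ++ y) → List.Lex (· < ·) x y
  | [], _, _, h => h
  | _ :: p, _, _, h => myLex_strip p ((List.lex_cons_iff).1 h)

theorem myLex_close : ∀ {x y : List A}, x.length = y.length → List.Lex (· < ·) x y →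
    ∀ (s t : List A), List.Lex (· < ·) (x ++ s) (y ++ t)
  | _, _, hlen, .nil, _, _ => by simp at hlen
  | _, _, _, .rel h, _, _ => .rel h
  | _, _, hlen, .cons h, s, t => .cons (myLex_close (by simpa using hlen) h s t)

theorem myLex_prefix_or : ∀ {x y : List A}, List.Lex (· < ·) x y →
    x <+: y ∨ ∀ z : List A, List.Lex (· < ·) (x ++ z) y
  | _, _, .nil => Or.inl (List.nil_prefix)
  | _, _, .rel h => Or.inr fun _ => .rel h
  | _, _, .cons h => (myLex_prefix_or h).imp (fun hp => List.cons_prefix_cons.2 ⟨rfl, hp⟩)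
      (fun hf => fun z => .cons (hf z))

end ListLemmas

section Lyndon
variable {n : ℕ}

local notation "LexLt" => List.Lex ((· < ·) : Fin n → Fin n → Prop)

theorem fm_ne_one_iff (u : FreeMonoid (Fin n)) : u ≠ 1 ↔ FreeMonoid.toList u ≠ [] := by
  constructor
  · intro h h'; exact h (FreeMonoid.toList.injective h')
  · intro h h'; exact h (by rw [h']; rfl)

theorem fm_eq_of_toList {u v : FreeMonoid (Fin n)}
    (h : FreeMonoid.toList u = FreeMonoid.toList v) : u = v :=
  FreeMonoid.toList.injective h

/-- Fact A: a Lyndon word is smaller than each of its proper suffixes. -/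
theorem lyndon_lt_suffix {u v w : FreeMonoid (Fin n)} (hu : IsLyndon u)
    (hv : v ≠ 1) (hw : w ≠ 1) (huv : u = v * w) : wlt u w := by
  have h1 : wlt u (w * v) := hu.2 v w hv hw huv
  have h1' : LexLt u.toList (w.toList ++ v.toList) := h1
  have hvl : v.toList ≠ [] := (fm_ne_one_iff v).1 hv
  have hwl : w.toList ≠ [] := (fm_ne_one_iff w).1 hw
  have hulen : u.toList.length = v.toList.length + w.toList.length := by
    rw [huv]; simp [FreeMonoid.toList_mul]
  rcases myLex_trichotomy u.toList w.toList with h | h | h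
  · exact h
  · exfalso
    have := congrArg List.length h
    have hv1 : 0 < v.toList.length := List.length_pos_iff.2 hvl
    omega
  · exfalso
    rcases myLex_prefix_or h with ⟨m, hm⟩ | hf
    · -- w.toList ++ m = u.toList
      have hmlen : m.length = v.toList.length := by
        have := congrArg List.length hm
        simp at this; omega
      have hmne : m ≠ [] := by
        intro h0
        rw [h0] at hmlen
        simp at hmlen
        exact hvl (List.length_eq_zero_iff.1 hmlen.symm)
      have key : u = FreeMonoid.ofList w.toList * FreeMonoid.ofList m := by
        apply fm_eq_of_toList
        simpa [FreeMonoid.toList_mul] using hm.symm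
      have h2 : wlt u (FreeMonoid.ofList m * FreeMonoid.ofList w.toList) :=
        hu.2 _ _ ((fm_ne_one_iff _).2 (by simpa using hwl))
          ((fm_ne_one_iff _).2 (by simpa using hmne)) key
      have h2' : LexLt u.toList (m ++ w.toList) := h2
      have h3 : LexLt m v.toList := by
        apply myLex_strip w.toList
        rw [hm]; exact h1'
      have h4 : LexLt (m ++ w.toList) u.toList := by
        have := myLex_close hmlen h3 w.toList w.toList
        have huvl : u.toList = v.toList ++ w.toList := by rw [huv]; rfl
        rw [huvl]; exact this
      exact myLex_asymm h2' h4
    · exact myLex_asymm h1' (hf v.toList)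

theorem lyndon_of_lt_suffix {u : FreeMonoid (Fin n)} (h0 : u ≠ 1)
    (h : ∀ v w : FreeMonoid (Fin n), v ≠ 1 → w ≠ 1 → u = v * w → wlt u w) : IsLyndon u :=
  ⟨h0, fun v w hv hw huv => List.Lex.append_right _ v.toList (h v w hv hw huv)⟩

theorem exists_lyndon_fact {u : FreeMonoid (Fin n)} (hu : IsLyndon u)
    (h2 : 2 ≤ FreeMonoid.length u) :
    ∃ v w : FreeMonoid (Fin n), IsLyndon v ∧ IsLyndon w ∧ u = v * w := by
  classical
  set ul := u.toList with hul
  have hlen2 : 2 ≤ ul.length := h2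
  -- the finite set of proper nonempty suffixes
  let C : Finset (List (Fin n)) := (Finset.Ico 1 ul.length).image (fun i => ul.drop i)
  have hCne : C.Nonempty := ⟨ul.drop 1, Finset.mem_image.2 ⟨1, by simp; omega, rfl⟩⟩
  set w : List (Fin n) := C.min' hCne with hwdef
  have hwC : w ∈ C := Finset.min'_mem _ _
  obtain ⟨i, hi, hdrop⟩ := Finset.mem_image.1 hwC
  rw [Finset.mem_Ico] at hi
  have hwsuf : w <:+ ul := hdrop ▸ List.drop_suffix i ul
  have hwlen : w.length = ul.length - i := by rw [← hdrop]; simp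
  have hwne : w ≠ [] := by
    intro h0; rw [h0] at hwlen; simp at hwlen; omega
  have hwproper : w.length < ul.length := by omega
  -- minimality
  have hmin : ∀ s : List (Fin n), s <:+ ul → s ≠ [] → s.length < ul.length →
      s ≠ w → LexLt w s := by
    intro s hs hsne hslen hsw
    have hsC : s ∈ C := by
      obtain ⟨p, hp⟩ := hs
      have : s = ul.drop p.length := by rw [← hp]; simp
      refine Finset.mem_image.2 ⟨p.length, Finset.mem_Ico.2 ⟨?_, ?_⟩, this.symm⟩
      · have := congrArg List.length hp; simp at this; omega
      · have := congrArg List.length hp; simp at this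
        have : s.length ≠ 0 := fun h0 => hsne (List.length_eq_zero_iff.1 h0)
        omega
    have hle : w ≤ s := Finset.min'_le _ _ hsC
    have hlt : w < s := lt_of_le_of_ne hle (fun h => hsw h.symm)
    exact hlt
  obtain ⟨p, hp⟩ := hwsuf
  have hpne : p ≠ [] := by
    intro h0; rw [h0] at hp; simp at hp
    rw [hp] at hwproper; omega
  refine ⟨FreeMonoid.ofList p, FreeMonoid.ofList w, ?_, ?_, ?_⟩
  · -- v := ofList p is Lyndon
    apply lyndon_of_lt_suffix ((fm_ne_one_iff _).2 (by simpa using hpne))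
    intro a b ha hb hab
    have habl : p = a.toList ++ b.toList := by
      have := congrArg FreeMonoid.toList hab
      simpa [FreeMonoid.toList_mul] using this
    have hal : a.toList ≠ [] := (fm_ne_one_iff a).1 ha
    have hbl : b.toList ≠ [] := (fm_ne_one_iff b).1 hb
    set A := a.toList; set B := b.toList
    show LexLt p B
    by_contra hcon
    have hBlen : B.length < p.length := by
      rw [habl]; simp
      exact Nat.pos_of_ne_zero (fun h0 => hal (List.length_eq_zero_iff.1 h0))
    rcases myLex_trichotomy p B with h | h | h
    · exact hcon h
    · rw [h] at hBlen; omega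
    -- h : LexLt B p
    have hulBW : ul = A ++ (B ++ w) := by rw [← hp, habl]; simp
    have hAne : A ≠ [] := hal
    -- fact A : ul < B ++ w
    have hfa : LexLt ul (B ++ w) := by
      have := lyndon_lt_suffix (u := u) (v := FreeMonoid.ofList A)
        (w := FreeMonoid.ofList (B ++ w)) hu
        ((fm_ne_one_iff _).2 (by simpa using hAne))
        ((fm_ne_one_iff _).2 (by simp [hwne]))
        (fm_eq_of_toList (by simpa using hulBW))
      simpa [wlt] using this
    rcases myLex_prefix_or h with ⟨c, hc⟩ | hf
    · -- B ++ c = p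
      have hcne : c ≠ [] := by
        intro h0; rw [h0] at hc; simp at hc
        rw [← hc] at hBlen; omega
      have hulB : ul = B ++ (c ++ w) := by rw [← hp, ← hc]; simp
      have h5 : LexLt (c ++ w) w := by
        apply myLex_strip B
        rw [← hulB]; exact hfa
      have h6 : LexLt w (c ++ w) := by
        apply hmin (c ++ w)
        · exact ⟨B, by rw [hulB]⟩
        · simp [hwne]
        · rw [hulB]; simp
          exact Nat.pos_of_ne_zero (fun h0 => hbl (List.length_eq_zero_iff.1 h0))
        · intro h0
          have := congrArg List.length h0; simp at this
          exact hcne this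
      exact myLex_asymm h5 h6
    · -- ∀ z, LexLt (B ++ z) p
      have h7 : LexLt (B ++ w) ul := by
        rw [← hp]
        exact List.Lex.append_right _ w (hf w)
      exact myLex_asymm hfa h7
  · -- w Lyndon
    apply lyndon_of_lt_suffix ((fm_ne_one_iff _).2 (by simpa using hwne))
    intro a b ha hb hab
    have habl : w = a.toList ++ b.toList := by
      have := congrArg FreeMonoid.toList hab
      simpa [FreeMonoid.toList_mul] using this
    have hal : a.toList ≠ [] := (fm_ne_one_iff a).1 ha
    have hbl : b.toList ≠ [] := (fm_ne_one_iff b).1 hb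
    show LexLt w b.toList
    apply hmin
    · exact List.IsSuffix.trans ⟨a.toList, habl.symm⟩ ⟨p, hp⟩
    · exact hbl
    · have : b.toList.length < w.length := by
        rw [habl]; simp
        exact Nat.pos_of_ne_zero (fun h0 => hal (List.length_eq_zero_iff.1 h0))
      omega
    · intro h0
      have := congrArg List.length h0
      rw [habl] at this; simp at this
      exact hal this
  · exact fm_eq_of_toList (by simpa using hp.symm)

theorem exists_shirshov {u : FreeMonoid (Fin n)} (hu : IsLyndon u)
    (h2 : 2 ≤ FreeMonoid.length u) : ∃ v w : FreeMonoid (Fin n), IsShirshov u v w := by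
  have hS : {m : ℕ | ∃ v w : FreeMonoid (Fin n),
      IsLyndon v ∧ IsLyndon w ∧ u = v * w ∧ FreeMonoid.length v = m}.Nonempty := by
    obtain ⟨v, w, hv, hw, huvw⟩ := exists_lyndon_fact hu h2
    exact ⟨FreeMonoid.length v, v, w, hv, hw, huvw, rfl⟩
  obtain ⟨v, w, hv, hw, huvw, hlen⟩ := Nat.sInf_mem hS
  exact ⟨v, w, hv, hw, huvw, fun v' w' hv' hw' h' =>
    hlen ▸ Nat.sInf_le ⟨v', w', hv', hw', h', rfl⟩⟩

end Lyndon

section AlgebraLemmas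
open Submodule
variable (F : Type) [Field F] {n : ℕ}

theorem wlt_trans {a b c : FreeMonoid (Fin n)} (h1 : wlt a b) (h2 : wlt b c) : wlt a c :=
  myLex_trans h1 h2

theorem wlt_mul_left {y m : FreeMonoid (Fin n)} (x : FreeMonoid (Fin n)) (h : wlt y m) :
    wlt (x * y) (x * m) :=
  List.Lex.append_left _ h x.toList

theorem wlt_mul_close {x m1 : FreeMonoid (Fin n)} (y m2 : FreeMonoid (Fin n))
    (hlen : FreeMonoid.length x = FreeMonoid.length m1) (h : wlt x m1) :
    wlt (x * y) (m1 * m2) :=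
  myLex_close hlen h y.toList m2.toList

theorem wordOf_mul (x y : FreeMonoid (Fin n)) :
    wordOf F (x * y) = wordOf F x * wordOf F y :=
  map_mul (MonoidAlgebra.of F (FreeMonoid (Fin n))) x y

/-- words strictly greater than `l`, of the same length -/
def GtSet (l : FreeMonoid (Fin n)) : Set (MonoidAlgebra F (FreeMonoid (Fin n))) :=
  { y | ∃ m : FreeMonoid (Fin n),
      FreeMonoid.length m = FreeMonoid.length l ∧ wlt l m ∧ y = wordOf F m }

/-- words greater than or equal to `l`, of the same length -/
def GeSet (l : FreeMonoid (Fin n)) : Set (MonoidAlgebra F (FreeMonoid (Fin n))) :=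
  { y | ∃ m : FreeMonoid (Fin n),
      FreeMonoid.length m = FreeMonoid.length l ∧ (l = m ∨ wlt l m) ∧ y = wordOf F m }

theorem gt_subset_ge (l : FreeMonoid (Fin n)) : GtSet F l ⊆ GeSet F l := by
  rintro y ⟨m, h1, h2, h3⟩
  exact ⟨m, h1, Or.inr h2, h3⟩

theorem span_ge_le_gt {l x : FreeMonoid (Fin n)} (hlt : wlt l x)
    (hlen : FreeMonoid.length x = FreeMonoid.length l) :
    span F (GeSet F x) ≤ span F (GtSet F l) := by
  apply span_le.2
  rintro y ⟨m, h1, h2, h3⟩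
  apply subset_span
  refine ⟨m, by omega, ?_, h3⟩
  rcases h2 with rfl | h2
  · exact hlt
  · exact wlt_trans hlt h2

theorem ge_mul_ge {x y : FreeMonoid (Fin n)}
    {a b : MonoidAlgebra F (FreeMonoid (Fin n))}
    (ha : a ∈ span F (GeSet F x)) (hb : b ∈ span F (GeSet F y)) :
    a * b ∈ span F (GeSet F (x * y)) := by
  have h := Submodule.mul_mem_mul ha hb
  rw [Submodule.span_mul_span] at h
  refine span_le.2 ?_ h
  rintro z hz
  rw [Set.mem_mul] at hz
  obtain ⟨z1, hz1, z2, hz2, rfl⟩ := hz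
  obtain ⟨m1, hl1, ho1, rfl⟩ := hz1
  obtain ⟨m2, hl2, ho2, rfl⟩ := hz2
  apply subset_span
  refine ⟨m1 * m2, by simp [FreeMonoid.length_mul]; omega, ?_, (wordOf_mul F m1 m2).symm⟩
  rcases ho1 with rfl | h1
  · rcases ho2 with rfl | h2
    · exact Or.inl rfl
    · exact Or.inr (wlt_mul_left x h2)
  · exact Or.inr (wlt_mul_close y m2 hl1.symm h1)

theorem gt_mul_ge {x y : FreeMonoid (Fin n)}
    {a b : MonoidAlgebra F (FreeMonoid (Fin n))}
    (ha : a ∈ span F (GtSet F x)) (hb : b ∈ span F (GeSet F y)) :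
    a * b ∈ span F (GtSet F (x * y)) := by
  have h := Submodule.mul_mem_mul ha hb
  rw [Submodule.span_mul_span] at h
  refine span_le.2 ?_ h
  rintro z hz
  rw [Set.mem_mul] at hz
  obtain ⟨z1, hz1, z2, hz2, rfl⟩ := hz
  obtain ⟨m1, hl1, h1, rfl⟩ := hz1
  obtain ⟨m2, hl2, ho2, rfl⟩ := hz2
  apply subset_span
  exact ⟨m1 * m2, by simp [FreeMonoid.length_mul]; omega,
    wlt_mul_close y m2 hl1.symm h1, (wordOf_mul F m1 m2).symm⟩

theorem word_mul_gt {x y : FreeMonoid (Fin n)}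
    {b : MonoidAlgebra F (FreeMonoid (Fin n))}
    (hb : b ∈ span F (GtSet F y)) :
    wordOf F x * b ∈ span F (GtSet F (x * y)) := by
  have hx : wordOf F x ∈ span F ({wordOf F x} : Set _) :=
    subset_span rfl
  have h := Submodule.mul_mem_mul hx hb
  rw [Submodule.span_mul_span] at h
  refine span_le.2 ?_ h
  rintro z hz
  rw [Set.mem_mul] at hz
  obtain ⟨z1, hz1, z2, hz2, rfl⟩ := hz
  rcases hz1 with rfl
  obtain ⟨m2, hl2, h2, rfl⟩ := hz2
  apply subset_span
  exact ⟨x * m2, by simp [FreeMonoid.length_mul]; omega,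
    wlt_mul_left x h2, (wordOf_mul F x m2).symm⟩

end AlgebraLemmas

/-- for any Lyndon word `l`, in the free algebra one has
`[l] = a_l·l + (linear combination of greater words of the same length)` with
`a_l ≠ 0`, where `[·]` is defined by `[x_k] = x_k` and
`[u] = [w]·[v] − p_{wv}·[v]·[w]` on the Shirshov decomposition `u = v·w`. -/
theorem stmt_10 (F : Type) [Field F] [CharZero F] (n : ℕ) (hn : 1 ≤ n)
    (q : Fin n → Fin n → F) (hq : ∀ k l, q k l ≠ 0)
    (br : FreeMonoid (Fin n) → MonoidAlgebra F (FreeMonoid (Fin n)))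
    (hbr1 : ∀ k : Fin n, br (FreeMonoid.of k) = wordOf F (FreeMonoid.of k))
    (hbr2 : ∀ u v w : FreeMonoid (Fin n), IsLyndon u → 2 ≤ FreeMonoid.length u →
      IsShirshov u v w →
      br u = br w * br v - chiF F q (degw w) (degw v) • (br v * br w))
    (l : FreeMonoid (Fin n)) (hl : IsLyndon l) :
    ∃ c : F, c ≠ 0 ∧
      br l - c • wordOf F l ∈
        Submodule.span F
          { y : MonoidAlgebra F (FreeMonoid (Fin n)) | ∃ w : FreeMonoid (Fin n),
              FreeMonoid.length w = FreeMonoid.length l ∧ wlt l w ∧ y = wordOf F w } := by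
  suffices H : ∀ N : ℕ, ∀ l : FreeMonoid (Fin n), FreeMonoid.length l = N → IsLyndon l →
      ∃ c : F, c ≠ 0 ∧ br l - c • wordOf F l ∈ Submodule.span F (GtSet F l) by
    exact H _ l rfl hl
  intro N
  induction N using Nat.strong_induction_on with
  | _ N ih =>
  intro l hlN hl
  subst hlN
  have h1 : 1 ≤ FreeMonoid.length l :=
    Nat.one_le_iff_ne_zero.2 fun h0 => hl.1 (FreeMonoid.length_eq_zero.1 h0)
  rcases eq_or_lt_of_le h1 with h1' | h2
  · -- length = 1
    obtain ⟨k, rfl⟩ := FreeMonoid.length_eq_one.1 h1'.symm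
    exact ⟨1, one_ne_zero, by rw [hbr1 k, one_smul, sub_self]; exact zero_mem _⟩
  · obtain ⟨v, w, hsh⟩ := exists_shirshov hl h2
    obtain ⟨hv, hw, hlvw, hmin4⟩ := hsh
    have hlen : FreeMonoid.length v + FreeMonoid.length w = FreeMonoid.length l := by
      rw [hlvw, FreeMonoid.length_mul]
    have hv1 : 1 ≤ FreeMonoid.length v :=
      Nat.one_le_iff_ne_zero.2 fun h0 => hv.1 (FreeMonoid.length_eq_zero.1 h0)
    have hw1 : 1 ≤ FreeMonoid.length w :=
      Nat.one_le_iff_ne_zero.2 fun h0 => hw.1 (FreeMonoid.length_eq_zero.1 h0)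
    obtain ⟨cv, hcv0, hcv⟩ := ih (FreeMonoid.length v) (by omega) v rfl hv
    obtain ⟨cw, hcw0, hcw⟩ := ih (FreeMonoid.length w) (by omega) w rfl hw
    set p := chiF F q (degw w) (degw v) with hpdef
    have hp0 : p ≠ 0 := Finset.prod_ne_zero_iff.2 fun k _ =>
      Finset.prod_ne_zero_iff.2 fun k' _ => pow_ne_zero _ (hq k k')
    have hbrl : br l = br w * br v - p • (br v * br w) :=
      hbr2 l v w hl h2 ⟨hv, hw, hlvw, hmin4⟩
    have hbrv_ge : br v ∈ Submodule.span F (GeSet F v) := by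
      have hsplit : br v = cv • wordOf F v + (br v - cv • wordOf F v) := by abel
      rw [hsplit]
      exact add_mem (Submodule.smul_mem _ cv (Submodule.subset_span ⟨v, rfl, Or.inl rfl, rfl⟩))
        (Submodule.span_mono (gt_subset_ge F v) hcv)
    have hbrw_ge : br w ∈ Submodule.span F (GeSet F w) := by
      have hsplit : br w = cw • wordOf F w + (br w - cw • wordOf F w) := by abel
      rw [hsplit]
      exact add_mem (Submodule.smul_mem _ cw (Submodule.subset_span ⟨w, rfl, Or.inl rfl, rfl⟩))
        (Submodule.span_mono (gt_subset_ge F w) hcw)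
    have hlwv : wlt l (w * v) := hl.2 v w hv.1 hw.1 hlvw
    have hlenwv : FreeMonoid.length (w * v) = FreeMonoid.length l := by
      rw [FreeMonoid.length_mul]; omega
    have hterm1 : br w * br v ∈ Submodule.span F (GtSet F l) :=
      span_ge_le_gt F hlwv hlenwv (ge_mul_ge F hbrw_ge hbrv_ge)
    have hterm2 : br v * br w - (cv * cw) • wordOf F l ∈ Submodule.span F (GtSet F l) := by
      have hexp : br v * br w - (cv * cw) • wordOf F l
          = (br v - cv • wordOf F v) * br w
            + cv • (wordOf F v * (br w - cw • wordOf F w)) := by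
        rw [hlvw, wordOf_mul]
        simp only [sub_mul, mul_sub, smul_mul_assoc, mul_smul_comm, smul_smul, smul_sub]
        abel
      rw [hexp]
      refine add_mem ?_ (Submodule.smul_mem _ _ ?_)
      · have h := gt_mul_ge F hcv hbrw_ge
        rw [← hlvw] at h; exact h
      · have h := word_mul_gt F (x := v) hcw
        rw [← hlvw] at h; exact h
    refine ⟨-(p * (cv * cw)), by simp [hp0, hcv0, hcw0], ?_⟩
    have heq : br l - (-(p * (cv * cw))) • wordOf F l
        = br w * br v - p • (br v * br w - (cv * cw) • wordOf F l) := by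
      rw [hbrl]
      simp only [neg_smul, sub_neg_eq_add, smul_sub, smul_smul]
      abel
    rw [heq]
    exact sub_mem hterm1 (Submodule.smul_mem _ _ hterm2)

end
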